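/- Let n ∈ ℕ with n ≥ 3 and let v := ⌊4(n-3)/5⌋. Then the integer 2^v + 1 is not representable as an n-bit posit: there exists no bit string M of length n with π(M) = 2^v + 1. Hence 2^{⌊4(n-3)/5⌋} is the largest consecutive integer representable by n-bit posits. -/

import Mathlib

/-- Integer value of a bit string read MSB → LSB. -/
def bitsToNat (L : List Bool) : ℕ :=
  L.foldl (fun a b => 2 * a + (if b then 1 else 0)) 0

/-- The posit decoding function `π`. A bit string (MSB → LSB, padded on the right with
zero "ghost bits" as needed) consists of a sign bit `S`, a run `R` of `k ≥ 1` identical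
bits, a terminating bit (the negation of the run bits), two exponent bits and the
fraction bits. The all-zeros string encodes `0` (`some 0`), `10…0` encodes NaR (`none`),
and every other string encodes `((1 - 3S) + f) · 2^e` with regime `r = k - 1` (run of
ones) or `r = -k` (run of zeros), exponent value `ê ∈ {0,1,2,3}`, fraction `f ∈ [0,1)`
and exponent `e = (-1)^S (4r + ê + S)`. -/
def positVal : List Bool → Option ℚ
  | [] => some 0
  | S :: rest =>
    if rest.all (fun b => b == false) then
      if S then none else some 0
    else
      let b0 : Bool := rest.getD 0 false
      let k : ℕ := (rest.takeWhile (fun b => b == b0)).length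
      let r : ℤ := if b0 then (k : ℤ) - 1 else -(k : ℤ)
      let ehat : ℤ := 2 * (if rest.getD (k + 1) false then 1 else 0) +
        (if rest.getD (k + 2) false then 1 else 0)
      let F : List Bool := rest.drop (k + 3)
      let f : ℚ := (bitsToNat F : ℚ) / 2 ^ F.length
      let s : ℤ := if S then 1 else 0
      let e : ℤ := (if S then -1 else 1) * (4 * r + ehat + s)
      some (((1 - 3 * (s : ℚ)) + f) * 2 ^ e)

lemma bitsToNat_aux (L : List Bool) : ∀ a : ℕ,
    L.foldl (fun a b => 2 * a + (if b then 1 else 0)) a = a * 2 ^ L.length + bitsToNat L := by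
  induction L with
  | nil => intro a; simp [bitsToNat]
  | cons b T ih =>
      intro a
      simp only [List.foldl_cons, List.length_cons, bitsToNat] at *
      rw [ih, ih (2 * 0 + if b then 1 else 0)]
      ring

lemma bitsToNat_cons (b : Bool) (T : List Bool) :
    bitsToNat (b :: T) = (if b then 1 else 0) * 2 ^ T.length + bitsToNat T := by
  simpa [bitsToNat] using bitsToNat_aux T (if b then 1 else 0)

lemma bitsToNat_lt (L : List Bool) : bitsToNat L < 2 ^ L.length := by
  induction L with
  | nil => simp [bitsToNat]
  | cons b T ih =>
      rw [bitsToNat_cons]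
      have : (if b then 1 else 0) ≤ 1 := by split <;> omega
      simp only [List.length_cons, pow_succ]
      nlinarith [Nat.two_pow_pos T.length]

def natToBits : ℕ → ℕ → List Bool
  | 0, _ => []
  | L+1, m => (decide (2 ^ L ≤ m)) :: natToBits L (m % 2 ^ L)

lemma natToBits_length (L m : ℕ) : (natToBits L m).length = L := by
  induction L generalizing m with
  | zero => rfl
  | succ L ih => simp [natToBits, ih]

lemma bitsToNat_natToBits (L m : ℕ) (h : m < 2 ^ L) : bitsToNat (natToBits L m) = m := by
  induction L generalizing m with
  | zero => simp [natToBits, bitsToNat]; omega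
  | succ L ih =>
      have hpos : 0 < 2 ^ L := Nat.two_pow_pos L
      rw [natToBits, bitsToNat_cons, natToBits_length,
        ih _ (Nat.mod_lt _ hpos)]
      by_cases hle : 2 ^ L ≤ m
      · have hm : m % 2 ^ L = m - 2 ^ L := by
          rw [Nat.mod_eq_sub_mod hle, Nat.mod_eq_of_lt (by rw [pow_succ] at h; omega)]
        simp [hle, hm, Nat.add_sub_cancel' hle]
      · have hm : m % 2 ^ L = m := Nat.mod_eq_of_lt (by omega)
        simp [hle, hm]

lemma takeWhile_run (k : ℕ) (b0 : Bool) (tail : List Bool) :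
    List.takeWhile (fun b => b == b0) (List.replicate k b0 ++ (!b0) :: tail)
      = List.replicate k b0 := by
  induction k with
  | zero => simp
  | succ k ih => simp [List.replicate_succ, List.takeWhile_cons, ih]

lemma getD_run (k : ℕ) (b0 : Bool) (tail : List Bool) (i : ℕ) :
    (List.replicate k b0 ++ (!b0) :: tail).getD (k + 1 + i) false = tail.getD i false := by
  rw [show List.replicate k b0 ++ (!b0) :: tail = (List.replicate k b0 ++ [!b0]) ++ tail by simp,
    List.getD_append_right _ _ _ _ (by simp)]
  simp

lemma drop_run (k : ℕ) (b0 : Bool) (tail : List Bool) :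
    (List.replicate k b0 ++ (!b0) :: tail).drop (k + 3) = tail.drop 2 := by
  rw [show List.replicate k b0 ++ (!b0) :: tail = (List.replicate k b0 ++ [!b0]) ++ tail by simp]
  rw [show k + 3 = (List.replicate k b0 ++ [!b0]).length + 2 by simp]
  rw [List.drop_append]
  simp

lemma all_run (k : ℕ) (hk : 1 ≤ k) (b0 : Bool) (tail : List Bool) :
    (List.replicate k b0 ++ (!b0) :: tail).all (fun b => b == false) = false := by
  rcases b0 with _ | _
  · simp
  · obtain ⟨k, rfl⟩ : ∃ k', k = k' + 1 := ⟨k - 1, by omega⟩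
    simp [List.replicate_succ]

lemma getD0_run (k : ℕ) (hk : 1 ≤ k) (b0 : Bool) (tail : List Bool) :
    (List.replicate k b0 ++ (!b0) :: tail).getD 0 false = b0 := by
  obtain ⟨k, rfl⟩ : ∃ k', k = k' + 1 := ⟨k - 1, by omega⟩
  simp [List.replicate_succ]

lemma positVal_encode (S b0 : Bool) (k : ℕ) (hk : 1 ≤ k) (tail : List Bool) :
    positVal (S :: (List.replicate k b0 ++ (!b0) :: tail)) =
      some (((1 - 3 * (if S then (1:ℚ) else 0)) +
        (bitsToNat (tail.drop 2) : ℚ) / 2 ^ (tail.drop 2).length) *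
        2 ^ ((if S then (-1:ℤ) else 1) *
          (4 * (if b0 then (k:ℤ) - 1 else -(k:ℤ)) +
           (2 * (if tail.getD 0 false then (1:ℤ) else 0) +
            (if tail.getD 1 false then (1:ℤ) else 0)) +
           (if S then (1:ℤ) else 0)))) := by
  rw [positVal]
  rw [if_neg (by rw [all_run k hk b0 tail]; simp)]
  have g1 : (List.replicate k b0 ++ (!b0) :: tail).getD (k + 1) false = tail.getD 0 false := by
    simpa using getD_run k b0 tail 0
  have g2 : (List.replicate k b0 ++ (!b0) :: tail).getD (k + 2) false = tail.getD 1 false := by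
    have := getD_run k b0 tail 1
    rwa [show k + 1 + 1 = k + 2 by omega] at this
  simp only [getD0_run k hk, takeWhile_run, List.length_replicate, g1, g2, drop_run]
  push_cast
  norm_num

lemma rep_main (n k : ℕ) (S b0 b1 b2 : Bool) (hk : 1 ≤ k) (hkn : k + 4 ≤ n)
    (Fv : ℕ) (hFv : Fv < 2 ^ (n - k - 4)) :
    ∃ M : List Bool, M.length = n ∧
      positVal M = some (((1 - 3 * (if S then (1:ℚ) else 0)) + (Fv : ℚ) / 2 ^ (n - k - 4)) *
        2 ^ ((if S then (-1:ℤ) else 1) * (4 * (if b0 then (k:ℤ) - 1 else -(k:ℤ)) +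
          (2 * (if b1 then (1:ℤ) else 0) + (if b2 then (1:ℤ) else 0)) +
          (if S then (1:ℤ) else 0)))) := by
  refine ⟨S :: (List.replicate k b0 ++ (!b0) :: (b1 :: b2 :: natToBits (n-k-4) Fv)), ?_, ?_⟩
  · simp [natToBits_length]
    omega
  · rw [positVal_encode S b0 k hk]
    simp only [List.getD_cons_zero, List.getD_cons_succ, List.drop_succ_cons,
      List.drop_zero, natToBits_length, bitsToNat_natToBits _ _ hFv]

lemma getD_replicate_false (a i : ℕ) : (List.replicate a false).getD i false = false := by
  induction a generalizing i with
  | zero => simp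
  | succ a ih =>
      cases i with
      | zero => simp [List.replicate_succ]
      | succ i => simpa [List.replicate_succ] using ih i

lemma bitsToNat_replicate_false (a : ℕ) : bitsToNat (List.replicate a false) = 0 := by
  induction a with
  | zero => rfl
  | succ a ih => rw [List.replicate_succ, bitsToNat_cons, ih]; simp

lemma rep_zero (n : ℕ) (hn : 3 ≤ n) :
    ∃ M : List Bool, M.length = n ∧ positVal M = some 0 := by
  refine ⟨List.replicate n false, by simp, ?_⟩
  rw [show List.replicate n false = false :: List.replicate (n-1) false by
    rw [← List.replicate_succ]; congr 1; omega]
  rw [positVal]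
  simp

lemma rep_one (n : ℕ) (hn : 3 ≤ n) :
    ∃ M : List Bool, M.length = n ∧ positVal M = some 1 := by
  refine ⟨false :: (List.replicate 1 true ++ (!true) :: List.replicate (n-3) false), ?_, ?_⟩
  · simp; omega
  · rw [positVal_encode false true 1 le_rfl]
    simp [getD_replicate_false, List.drop_replicate, bitsToNat_replicate_false]

lemma rep_negone (n : ℕ) (hn : 3 ≤ n) :
    ∃ M : List Bool, M.length = n ∧ positVal M = some (-1) := by
  refine ⟨true :: (List.replicate 1 true ++ (!true) :: List.replicate (n-3) false), ?_, ?_⟩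
  · simp; omega
  · rw [positVal_encode true true 1 le_rfl]
    simp [getD_replicate_false, List.drop_replicate, bitsToNat_replicate_false]
    norm_num

lemma rep_pos (n v : ℕ) (hn : 5 ≤ n) (hv : v = 4*(n-3)/5) (m : ℕ)
    (h1 : 1 ≤ m) (h2 : m ≤ 2 ^ v) :
    ∃ M : List Bool, M.length = n ∧ positVal M = some (m : ℚ) := by
  set e := Nat.log2 m with he
  have he1 : 2 ^ e ≤ m := Nat.log2_self_le (by omega)
  have he2 : m < 2 ^ (e+1) := Nat.lt_log2_self
  have hev : e ≤ v := (Nat.pow_le_pow_iff_right (by norm_num)).1 (he1.trans h2)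
  set k := e / 4 + 1 with hk
  have hkn : k + 4 ≤ n := by omega
  set p := n - k - 4 with hp
  set j := m - 2 ^ e with hj
  have hjlt : j < 2 ^ e := by
    have : 2 ^ (e+1) = 2 ^ e + 2 ^ e := by ring
    omega
  have hpe : j ≠ 0 → e ≤ p := by
    intro hjne
    have : 2 ^ e < 2 ^ v := lt_of_lt_of_le (by omega) h2
    have hev' : e < v := (Nat.pow_lt_pow_iff_right (by norm_num)).1 this
    omega
  set Fv := j * 2 ^ (p - e) with hFvdef
  have hkey : Fv * 2 ^ e = j * 2 ^ p := by
    rcases Nat.eq_zero_or_pos j with h | h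
    · simp [hFvdef, h]
    · rw [hFvdef, mul_assoc, ← pow_add, Nat.sub_add_cancel (hpe (by omega))]
  have hFv : Fv < 2 ^ p := by
    rcases Nat.eq_zero_or_pos j with h | h
    · simp [hFvdef, h]
    · have hep := hpe (by omega)
      calc Fv = j * 2 ^ (p - e) := rfl
        _ < 2 ^ e * 2 ^ (p - e) := by
            exact (Nat.mul_lt_mul_right (by positivity)).mpr hjlt
        _ = 2 ^ p := by rw [← pow_add, Nat.add_sub_cancel' hep]
  obtain ⟨M, hlen, hval⟩ := rep_main n k false true
    (decide (e % 4 / 2 = 1)) (decide (e % 4 % 2 = 1)) (by omega) hkn Fv hFv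
  refine ⟨M, hlen, hval.trans ?_⟩
  congr 1
  have hb1 : (if (decide (e % 4 / 2 = 1) : Bool) then (1:ℤ) else 0) = ((e % 4 / 2 : ℕ) : ℤ) := by
    by_cases h : e % 4 / 2 = 1 <;> simp [h] <;> omega
  have hb2 : (if (decide (e % 4 % 2 = 1) : Bool) then (1:ℤ) else 0) = ((e % 4 % 2 : ℕ) : ℤ) := by
    by_cases h : e % 4 % 2 = 1 <;> simp [h] <;> omega
  have hexp : (if false then (-1:ℤ) else 1) * (4 * (if true then (k:ℤ) - 1 else -(k:ℤ)) +
      (2 * (if (decide (e % 4 / 2 = 1) : Bool) then (1:ℤ) else 0) +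
       (if (decide (e % 4 % 2 = 1) : Bool) then (1:ℤ) else 0)) +
      (if false then (1:ℤ) else 0)) = ((e : ℕ) : ℤ) := by
    rw [hb1, hb2]
    simp only [if_true, if_false, Bool.false_eq_true]
    push_cast
    omega
  rw [hexp, zpow_natCast]
  have hQkey : (Fv : ℚ) * 2 ^ e = (j : ℚ) * 2 ^ p := by exact_mod_cast hkey
  have hQm : (m : ℚ) = 2 ^ e + (j : ℚ) := by
    have : m = 2 ^ e + j := by omega
    exact_mod_cast this
  have h2p : ((2:ℚ) ^ p) ≠ 0 := by positivity
  field_simp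
  rw [hQm]
  ring_nf
  simp only [← hp, Bool.false_eq_true, if_false]
  linear_combination hQkey

lemma rep_neg (n v : ℕ) (hn : 5 ≤ n) (hv : v = 4*(n-3)/5) (m : ℕ)
    (h1 : 2 ≤ m) (h2 : m ≤ 2 ^ v) :
    ∃ M : List Bool, M.length = n ∧ positVal M = some (-(m : ℚ)) := by
  set E := Nat.log2 (m-1) with hE
  have hE1 : 2 ^ E ≤ m - 1 := Nat.log2_self_le (by omega)
  have hE2 : m - 1 < 2 ^ (E+1) := Nat.lt_log2_self
  have hEv : E < v := by
    have : 2 ^ E < 2 ^ v := lt_of_le_of_lt hE1 (by omega)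
    exact (Nat.pow_lt_pow_iff_right (by norm_num)).1 this
  set k := E / 4 + 1 with hk
  have hkn : k + 4 ≤ n := by omega
  set p := n - k - 4 with hp
  have hpE : E ≤ p := by omega
  set d := 2 ^ (E+1) - m with hd
  have hdlt : d < 2 ^ E := by
    have : 2 ^ (E+1) = 2 ^ E + 2 ^ E := by ring
    omega
  set Fv := d * 2 ^ (p - E) with hFvdef
  have hkey : Fv * 2 ^ E = d * 2 ^ p := by
    rw [hFvdef, mul_assoc, ← pow_add, Nat.sub_add_cancel hpE]
  have hFv : Fv < 2 ^ p := by
    calc Fv = d * 2 ^ (p - E) := rfl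
      _ < 2 ^ E * 2 ^ (p - E) := (Nat.mul_lt_mul_right (by positivity)).mpr hdlt
      _ = 2 ^ p := by rw [← pow_add, Nat.add_sub_cancel' hpE]
  obtain ⟨M, hlen, hval⟩ := rep_main n k true false
    (decide ((3 - E % 4) / 2 = 1)) (decide ((3 - E % 4) % 2 = 1)) (by omega) hkn Fv hFv
  refine ⟨M, hlen, hval.trans ?_⟩
  congr 1
  have hb1 : (if (decide ((3 - E % 4) / 2 = 1) : Bool) then (1:ℤ) else 0)
      = (((3 - E % 4) / 2 : ℕ) : ℤ) := by
    by_cases h : (3 - E % 4) / 2 = 1 <;> simp [h] <;> omega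
  have hb2 : (if (decide ((3 - E % 4) % 2 = 1) : Bool) then (1:ℤ) else 0)
      = (((3 - E % 4) % 2 : ℕ) : ℤ) := by
    by_cases h : (3 - E % 4) % 2 = 1 <;> simp [h] <;> omega
  have hexp : (if true then (-1:ℤ) else 1) * (4 * (if false then (k:ℤ) - 1 else -(k:ℤ)) +
      (2 * (if (decide ((3 - E % 4) / 2 = 1) : Bool) then (1:ℤ) else 0) +
       (if (decide ((3 - E % 4) % 2 = 1) : Bool) then (1:ℤ) else 0)) +
      (if true then (1:ℤ) else 0)) = ((E : ℕ) : ℤ) := by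
    rw [hb1, hb2]
    simp only [if_true, if_false, Bool.false_eq_true]
    push_cast
    omega
  rw [hexp, zpow_natCast]
  have hQkey : (Fv : ℚ) * 2 ^ E = (d : ℚ) * 2 ^ p := by exact_mod_cast hkey
  have hQm : (d : ℚ) + (m : ℚ) = 2 ^ (E+1) := by
    have : d + m = 2 ^ (E+1) := by omega
    exact_mod_cast this
  have h2p : ((2:ℚ) ^ p) ≠ 0 := by positivity
  field_simp
  ring_nf
  simp only [← hp, if_true]
  push_cast at hQkey
  ring_nf at hQkey hQm
  linear_combination hQkey + 2 ^ p * hQm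

lemma positVal_eq (S : Bool) (rest : List Bool) (hall : rest.all (fun b => b == false) = false) :
    positVal (S :: rest) =
      some (((1 - 3 * (if S then (1:ℚ) else 0)) +
        (bitsToNat (rest.drop ((rest.takeWhile (fun b => b == rest.getD 0 false)).length + 3)) : ℚ) /
          2 ^ (rest.drop ((rest.takeWhile (fun b => b == rest.getD 0 false)).length + 3)).length) *
        2 ^ ((if S then (-1:ℤ) else 1) *
          (4 * (if rest.getD 0 false then ((rest.takeWhile (fun b => b == rest.getD 0 false)).length : ℤ) - 1
                else -((rest.takeWhile (fun b => b == rest.getD 0 false)).length : ℤ)) +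
           (2 * (if rest.getD ((rest.takeWhile (fun b => b == rest.getD 0 false)).length + 1) false then (1:ℤ) else 0) +
            (if rest.getD ((rest.takeWhile (fun b => b == rest.getD 0 false)).length + 2) false then (1:ℤ) else 0)) +
           (if S then (1:ℤ) else 0)))) := by
  rw [positVal, if_neg (by rw [hall]; simp)]
  cases S <;> norm_num

lemma nonrep_main_case (n v k p ehat N : ℕ) (hn : 3 ≤ n) (hv : v = 4*(n-3)/5)
    (hk : 1 ≤ k) (hehat : ehat ≤ 3) (hodd : ehat % 2 = 1 → k + 2 < n - 1)
    (hp : p = (n-1) - (k+3)) (hN : N < 2^p)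
    (heq : (2^p + N) * 2^(4*(k-1) + ehat) = (2^v + 1) * 2^p) : False := by
  set E := 4*(k-1) + ehat with hE
  have h2p : (0:ℕ) < 2^p := Nat.two_pow_pos _
  have h2E : (0:ℕ) < 2^E := Nat.two_pow_pos _
  have h1 : 2 ^ (v + p) < 2 ^ (p + 1 + E) := by
    calc 2^(v+p) = 2^v * 2^p := pow_add 2 v p
      _ < (2^v+1) * 2^p := by nlinarith
      _ = (2^p+N) * 2^E := heq.symm
      _ < (2^p + 2^p) * 2^E := by nlinarith
      _ = 2^(p+1+E) := by ring
  have hvE : v ≤ E := by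
    have := (Nat.pow_lt_pow_iff_right (by norm_num : 1 < 2)).1 h1; omega
  have h2 : 2 ^ (p + E) ≤ 2 ^ (v + 1 + p) := by
    have h1v : (1:ℕ) ≤ 2^v := Nat.one_le_two_pow
    calc 2^(p+E) = 2^p * 2^E := pow_add 2 p E
      _ ≤ (2^p+N) * 2^E := by nlinarith
      _ = (2^v+1) * 2^p := heq
      _ ≤ (2^v+2^v) * 2^p := by nlinarith
      _ = 2^(v+1+p) := by ring
  have hEv1 : E ≤ v + 1 := by
    have := (Nat.pow_le_pow_iff_right (by norm_num : 1 < 2)).1 h2; omega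
  rcases (by omega : E = v ∨ E = v + 1) with hEv | hEv
  · -- E = v
    have hZ : ((2:ℤ)^p + N) * 2^v = ((2:ℤ)^v + 1) * 2^p := by
      rw [hEv] at heq; exact_mod_cast heq
    have keyZ : (N:ℤ) * 2^v = 2^p := by linear_combination hZ
    have key : N * 2^v = 2^p := by exact_mod_cast keyZ
    have hN0 : 0 < N := by
      by_contra h
      have : N = 0 := by omega
      rw [this, zero_mul] at key
      omega
    rcases Nat.eq_zero_or_pos v with hv0 | hv1
    · rw [hv0, pow_zero, mul_one] at key
      omega
    · have hle : 2^v ≤ 2^p := by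
        calc 2^v = 1 * 2^v := (one_mul _).symm
          _ ≤ N * 2^v := Nat.mul_le_mul_right _ hN0
          _ = 2^p := key
      have hvp : v ≤ p := (Nat.pow_le_pow_iff_right (by norm_num : 1 < 2)).1 hle
      omega
  · -- E = v + 1
    have hveq : 2^(v+1) ≤ 2^v + 1 := by
      have : 2^p * 2^(v+1) ≤ (2^v + 1) * 2^p := by
        rw [hEv] at heq
        calc 2^p * 2^(v+1) ≤ (2^p + N) * 2^(v+1) := Nat.mul_le_mul_right _ (by omega)
          _ = (2^v + 1) * 2^p := heq
      have h' : 2^p * 2^(v+1) ≤ 2^p * (2^v+1) := by linarith [this]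
      exact Nat.le_of_mul_le_mul_left h' h2p
    have hv0 : v = 0 := by
      have : 2^(v+1) = 2^v + 2^v := by ring
      have h1v : (1:ℕ) ≤ 2^v := Nat.one_le_two_pow
      have : 2^v ≤ 1 := by omega
      by_contra h
      have : 2 ≤ 2^v := by
        calc 2 = 2^1 := (pow_one 2).symm
          _ ≤ 2^v := Nat.pow_le_pow_right (by norm_num) (by omega)
      omega
    have hE1 : E = 1 := by omega
    have hkehat : k = 1 ∧ ehat = 1 := by omega
    have : k + 2 < n - 1 := hodd (by omega)
    omega

lemma takeWhile_head_pos (rest : List Bool) (h : rest ≠ []) :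
    1 ≤ (rest.takeWhile (fun b => b == rest.getD 0 false)).length := by
  cases rest with
  | nil => exact absurd rfl h
  | cons b r => simp [List.takeWhile_cons]

lemma nonrep (n v : ℕ) (hn : 3 ≤ n) (hv : v = 4*(n-3)/5) :
    ¬ ∃ M : List Bool, M.length = n ∧ positVal M = some (((2^v + 1 : ℤ) : ℚ)) := by
  rintro ⟨M, hlen, hval⟩
  obtain ⟨S, rest, rfl⟩ : ∃ S rest, M = S :: rest := by
    cases M with
    | nil => simp at hlen; omega
    | cons a l => exact ⟨a, l, rfl⟩
  have hrlen : rest.length = n - 1 := by simp at hlen; omega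
  have htgt : (((2^v + 1 : ℤ) : ℚ)) = 2^v + 1 := by push_cast; ring
  have h1v : (1:ℚ) ≤ 2^v := by exact_mod_cast Nat.one_le_two_pow (n := v)
  rw [htgt] at hval
  by_cases hall : rest.all (fun b => b == false) = true
  · rw [positVal, if_pos (by rw [hall])] at hval
    cases S
    · rw [if_neg (by simp)] at hval
      have h0 := Option.some.inj hval
      linarith
    · rw [if_pos rfl] at hval
      exact nomatch hval
  · rw [positVal_eq S rest (by simpa using hall)] at hval
    have hval' := Option.some.inj hval
    set k := (rest.takeWhile (fun b => b == rest.getD 0 false)).length with hkdef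
    set F := rest.drop (k+3) with hFdef
    set N := bitsToNat F with hNdef
    set p := F.length with hpdef
    have hN : N < 2^p := bitsToNat_lt F
    have hp : p = (n-1) - (k+3) := by rw [hpdef, hFdef, List.length_drop, hrlen]
    have hf0 : (0:ℚ) ≤ (N:ℚ)/2^p := by positivity
    have hf1 : (N:ℚ)/2^p < 1 := by
      rw [div_lt_one (by positivity)]
      exact_mod_cast hN
    have hrne : rest ≠ [] := by
      intro h
      rw [h] at hrlen
      simp at hrlen
      omega
    have hk1 : 1 ≤ k := takeWhile_head_pos rest hrne
    cases S with
    | true =>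
      simp only [reduceIte] at hval'
      generalize heZ : (-1 : ℤ) * (4 * (if rest.getD 0 false then (k:ℤ) - 1 else -(k:ℤ)) +
        (2 * (if rest.getD (k + 1) false then (1:ℤ) else 0) +
         (if rest.getD (k + 2) false then (1:ℤ) else 0)) + 1) = eZ at hval'
      have hpos : (0:ℚ) < 2 ^ eZ := zpow_pos (by norm_num) _
      have hneg : ((1:ℚ) - 3 * 1 + (N:ℚ)/2^p) * 2 ^ eZ < 0 :=
        mul_neg_of_neg_of_pos (by linarith) hpos
      linarith
    | false =>
      simp only [show ((false = true) = False) from by simp, if_false] at hval'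
      cases hb0 : rest.getD 0 false with
      | false =>
        rw [hb0] at hval'
        simp only [show ((false = true) = False) from by simp, if_false] at hval'
        generalize heZ : (1 : ℤ) * (4 * -(k:ℤ) +
          (2 * (if rest.getD (k + 1) false then (1:ℤ) else 0) +
           (if rest.getD (k + 2) false then (1:ℤ) else 0)) + 0) = eZ at hval'
        have he : eZ ≤ -1 := by
          rw [← heZ]
          have hkk : (1:ℤ) ≤ (k:ℤ) := by exact_mod_cast hk1
          split_ifs <;> omega
        have h2e : (2:ℚ) ^ eZ ≤ 2 ^ (-1:ℤ) := zpow_le_zpow_right₀ (by norm_num) he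
        have h2e' : ((2:ℚ)) ^ (-1:ℤ) = 1/2 := by norm_num
        have hpos : (0:ℚ) < 2 ^ eZ := zpow_pos (by norm_num) _
        have hub : ((1:ℚ) - 3*0 + (N:ℚ)/2^p) * 2^eZ ≤ (1 - 3*0 + (N:ℚ)/2^p) * (1/2) := by
          apply mul_le_mul_of_nonneg_left (h2e.trans_eq h2e') (by linarith)
        linarith
      | true =>
        rw [hb0] at hval'
        simp only [reduceIte] at hval'
        set ehatN : ℕ := 2 * (if rest.getD (k+1) false then 1 else 0) +
          (if rest.getD (k+2) false then 1 else 0) with hehatdef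
        have hcast : (1:ℤ) * (4 * ((k:ℤ) - 1) +
            (2 * (if rest.getD (k + 1) false then (1:ℤ) else 0) +
             (if rest.getD (k + 2) false then (1:ℤ) else 0)) + 0)
            = ((4*(k-1) + ehatN : ℕ) : ℤ) := by
          rw [hehatdef]
          split_ifs <;> push_cast <;> omega
        rw [hcast, zpow_natCast] at hval'
        have hQ : ((2^p + N : ℕ) : ℚ) * (2:ℚ)^(4*(k-1)+ehatN) = ((2^v+1 : ℕ):ℚ) * 2^p := by
          push_cast
          field_simp at hval'
          linear_combination hval'
        have heq : (2^p + N) * 2^(4*(k-1)+ehatN) = (2^v+1) * 2^p := by exact_mod_cast hQ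
        have hehat3 : ehatN ≤ 3 := by
          rw [hehatdef]; split_ifs <;> norm_num
        refine nonrep_main_case n v k p ehatN N hn hv hk1 hehat3 ?_ hp hN heq
        intro hoddbit
        have hbit : rest.getD (k+2) false = true := by
          by_contra hc
          simp only [Bool.not_eq_true] at hc
          rw [hehatdef] at hoddbit
          rw [hc] at hoddbit
          simp only [show ((false = true) = False) from by simp, if_false] at hoddbit
          split_ifs at hoddbit <;> omega
        have : k + 2 < rest.length := by
          by_contra hc
          push_neg at hc
          rw [List.getD_eq_default _ _ hc] at hbit
          exact Bool.noConfusion hbit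
        omega

/-- **Largest consecutive posit integer.**
For `n ≥ 3` and `v = ⌊4(n-3)/5⌋`, the integer `2^v + 1` is not representable as an
`n`-bit posit; hence `2^v` is the largest consecutive integer of `n`-bit posits,
i.e. the greatest `M₀` such that every integer `m` with `|m| ≤ M₀` is representable
as an `n`-bit posit. -/
theorem posit_largest_consecutive_integer (n : ℕ) (hn : 3 ≤ n) (v : ℕ)
    (hv : v = 4 * (n - 3) / 5) :
    (¬ ∃ M : List Bool, M.length = n ∧ positVal M = some (((2 ^ v + 1 : ℤ) : ℚ))) ∧
    IsGreatest {M₀ : ℤ | ∀ m : ℤ, |m| ≤ M₀ →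
      ∃ M : List Bool, M.length = n ∧ positVal M = some (m : ℚ)} (2 ^ v) := by
  have hnr := nonrep n v hn hv
  refine ⟨hnr, ?_, ?_⟩
  · -- membership
    intro m hm
    have habs : |m| = if m < 0 then -m else m := by
      rcases lt_trichotomy m 0 with h | h | h
      · rw [abs_of_neg h, if_pos h]
      · simp [h]
      · rw [abs_of_pos h, if_neg (by omega)]
    have h2v : ((2:ℤ)^v) = ((2^v : ℕ) : ℤ) := by push_cast; ring
    rcases lt_trichotomy m 0 with hneg | h0 | hpos
    · -- negative
      set mN := (-m).toNat with hmN
      have hmN1 : 1 ≤ mN := by omega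
      have hmN2 : mN ≤ 2^v := by
        rw [habs, if_pos hneg, h2v] at hm
        omega
      have hcast : (m : ℚ) = -(mN : ℚ) := by
        have h' : m = -(mN : ℤ) := by
          have : ((mN : ℤ)) = -m := Int.toNat_of_nonneg (by omega)
          omega
        exact_mod_cast h'
      by_cases hn5 : 5 ≤ n
      · rcases eq_or_lt_of_le hmN1 with h1 | h1
        · obtain ⟨M, hMl, hMv⟩ := rep_negone n hn
          exact ⟨M, hMl, by rw [hMv, hcast, ← h1]; norm_num⟩
        · obtain ⟨M, hMl, hMv⟩ := rep_neg n v hn5 hv mN (by omega) hmN2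
          exact ⟨M, hMl, by rw [hMv, hcast]⟩
      · have hv0 : v = 0 := by omega
        have : mN = 1 := by rw [hv0] at hmN2; simp at hmN2; omega
        obtain ⟨M, hMl, hMv⟩ := rep_negone n hn
        exact ⟨M, hMl, by rw [hMv, hcast, this]; norm_num⟩
    · -- zero
      obtain ⟨M, hMl, hMv⟩ := rep_zero n hn
      exact ⟨M, hMl, by rw [hMv, h0]; norm_num⟩
    · -- positive
      set mN := m.toNat with hmN
      have hmN1 : 1 ≤ mN := by omega
      have hmN2 : mN ≤ 2^v := by
        rw [habs, if_neg (by omega), h2v] at hm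
        omega
      have hcast : (m : ℚ) = (mN : ℚ) := by
        have : ((mN : ℤ)) = m := Int.toNat_of_nonneg (by omega)
        exact_mod_cast this.symm
      by_cases hn5 : 5 ≤ n
      · obtain ⟨M, hMl, hMv⟩ := rep_pos n v hn5 hv mN hmN1 hmN2
        exact ⟨M, hMl, by rw [hMv, hcast]⟩
      · have hv0 : v = 0 := by omega
        have h1 : mN = 1 := by rw [hv0] at hmN2; simp at hmN2; omega
        obtain ⟨M, hMl, hMv⟩ := rep_one n hn
        exact ⟨M, hMl, by rw [hMv, hcast, h1]; norm_num⟩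
  · -- upper bound
    intro M₀ hM₀
    by_contra hlt
    push_neg at hlt
    refine hnr ?_
    refine hM₀ (2^v + 1) ?_
    have : (0:ℤ) < 2^v + 1 := by positivity
    rw [abs_of_pos this]
    omega
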